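/- Let A and B be Banach algebras and φ : A → B a continuous surjective algebra homomorphism. Assume that every continuous derivation from A into every Banach A-bimodule is inner. Then for every continuous algebra homomorphism σ : B → B and every closed two-sided ideal I of B, every continuous σ-derivation D : B → I is σ-inner, i.e. there exists t ∈ I with D(b) = σ(b)t − tσ(b) for all b ∈ B. -/

import Mathlib

/-- A pair of continuous (bounded bilinear) actions `l, r : A → X → X` makes the Banach
space `X` a Banach `A`-bimodule: `l` is a left action, `r` is a right action (written with
the algebra element first, so `r b x = x · b`), and the two actions commute. -/
def IsBanachBimodule {A X : Type*} [NormedRing A] [NormedAlgebra ℂ A]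
    [NormedAddCommGroup X] [NormedSpace ℂ X]
    (l : A →L[ℂ] X →L[ℂ] X) (r : A →L[ℂ] X →L[ℂ] X) : Prop :=
  (∀ a b : A, ∀ x : X, l (a * b) x = l a (l b x)) ∧
  (∀ a b : A, ∀ x : X, r (a * b) x = r b (r a x)) ∧
  (∀ a b : A, ∀ x : X, l a (r b x) = r b (l a x))

universe u v

/-- Left multiplication action of `B` on a left ideal `I`, as a continuous bilinear map. -/
noncomputable def idealLeftAct {B : Type*} [NormedRing B] [NormedAlgebra ℂ B]
    (I : Submodule ℂ B) (hIleft : ∀ b : B, ∀ x ∈ I, b * x ∈ I) :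
    B →L[ℂ] I →L[ℂ] I :=
  LinearMap.mkContinuous₂
    (LinearMap.mk₂ ℂ (fun b x => (⟨b * x.1, hIleft b x.1 x.2⟩ : I))
      (fun a b x => by ext; simp [add_mul])
      (fun c a x => by ext; simp [mul_smul_comm] )
      (fun b x y => by ext; simp [mul_add])
      (fun c b x => by ext; simp [mul_smul_comm]))
    1 (fun b x => by simpa using norm_mul_le b x.1)

/-- Right multiplication action of `B` on a right ideal `I`, as a continuous bilinear map. -/
noncomputable def idealRightAct {B : Type*} [NormedRing B] [NormedAlgebra ℂ B]
    (I : Submodule ℂ B) (hIright : ∀ b : B, ∀ x ∈ I, x * b ∈ I) :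
    B →L[ℂ] I →L[ℂ] I :=
  LinearMap.mkContinuous₂
    (LinearMap.mk₂ ℂ (fun b x => (⟨x.1 * b, hIright b x.1 x.2⟩ : I))
      (fun a b x => by ext; simp [mul_add])
      (fun c a x => by ext; simp [mul_smul_comm])
      (fun b x y => by ext; simp [add_mul])
      (fun c b x => by ext; simp [smul_mul_assoc]))
    1 (fun b x => by
      simp only [LinearMap.mk₂_apply, Submodule.coe_norm]
      calc ‖x.1 * b‖ ≤ ‖x.1‖ * ‖b‖ := norm_mul_le _ _
        _ = 1 * ‖b‖ * ‖x.1‖ := by ring)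

/-- Let `A`, `B` be Banach algebras and `φ : A → B` a continuous
surjective algebra homomorphism.  If every continuous derivation from `A` into every
Banach `A`-bimodule is inner (i.e. `A` is amenable), then for every continuous algebra
homomorphism `σ : B → B` and every closed two-sided ideal `I` of `B`, every continuous
`σ`-derivation `D : B → I` is `σ`-inner. -/
theorem sigma_ideal_inner_of_amenable_epimorphism
    {A : Type u} [NormedRing A] [NormedAlgebra ℂ A] [CompleteSpace A]
    {B : Type u} [NormedRing B] [NormedAlgebra ℂ B] [CompleteSpace B]
    (φ : A →L[ℂ] B) (hφmul : ∀ a b : A, φ (a * b) = φ a * φ b)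
    (hφsurj : Function.Surjective φ)
    (hamen : ∀ (X : Type u) [NormedAddCommGroup X] [NormedSpace ℂ X] [CompleteSpace X],
      ∀ l r : A →L[ℂ] X →L[ℂ] X, IsBanachBimodule l r →
      ∀ D : A →L[ℂ] X, (∀ a b : A, D (a * b) = l a (D b) + r b (D a)) →
      ∃ x : X, ∀ a : A, D a = l a x - r a x)
    (σ : B →L[ℂ] B) (hσmul : ∀ a b : B, σ (a * b) = σ a * σ b)
    (I : Submodule ℂ B) (hIclosed : IsClosed (I : Set B))
    (hIleft : ∀ b : B, ∀ x ∈ I, b * x ∈ I) (hIright : ∀ b : B, ∀ x ∈ I, x * b ∈ I)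
    (D : B →L[ℂ] B) (hDI : ∀ b : B, D b ∈ I)
    (hD : ∀ a b : B, D (a * b) = σ a * D b + D a * σ b) :
    ∃ t ∈ I, ∀ b : B, D b = σ b * t - t * σ b := by
  haveI : CompleteSpace I := hIclosed.completeSpace_coe
  set ψ : A →L[ℂ] B := σ.comp φ with hψ
  have hψmul : ∀ a b : A, ψ (a * b) = ψ a * ψ b := fun a b => by
    simp [hψ, hφmul, hσmul]
  set l : A →L[ℂ] I →L[ℂ] I := (idealLeftAct I hIleft).comp ψ with hl
  set r : A →L[ℂ] I →L[ℂ] I := (idealRightAct I hIright).comp ψ with hr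
  have hlval : ∀ a : A, ∀ x : I, ((l a x : B)) = ψ a * x.1 := fun a x => rfl
  have hrval : ∀ a : A, ∀ x : I, ((r a x : B)) = x.1 * ψ a := fun a x => rfl
  have hbimod : IsBanachBimodule l r := by
    refine ⟨fun a b x => ?_, fun a b x => ?_, fun a b x => ?_⟩ <;>
      ext <;> simp [hlval, hrval, hψmul, mul_assoc]
  set D' : A →L[ℂ] I := (D.comp φ).codRestrict I (fun a => show (D.comp φ) a ∈ I from hDI _) with hD'
  have hD'der : ∀ a b : A, D' (a * b) = l a (D' b) + r b (D' a) := by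
    intro a b
    ext
    simp only [hD', ContinuousLinearMap.coe_codRestrict_apply,
      ContinuousLinearMap.comp_apply, Submodule.coe_add, hlval, hrval]
    rw [hφmul, hD]
    rfl
  obtain ⟨x, hx⟩ := hamen I l r hbimod D' hD'der
  refine ⟨x.1, x.2, fun b => ?_⟩
  obtain ⟨a, rfl⟩ := hφsurj b
  have := congrArg (Subtype.val) (hx a)
  simpa [hD', hlval, hrval, hψ] using this
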